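/- arXiv:1805.05873 — 2 statements merged into one kernel-verified Lean document; each statement's English description precedes it below -/
import Mathlib

section
/- Let M : ℝ → Matrix (Fin n) (Fin n) ℝ be a differentiable symmetric-matrix-valued curve along a trajectory q(t), and define the Coriolis matrix C via the Christoffel symbols, i.e., C(q,v)_{ij} = Σ_k (1/2)(∂M_{ij}/∂q_k + ∂M_{ik}/∂q_j − ∂M_{jk}/∂q_i) v_k. Then the matrix N(q,v) = Ṁ(q) − 2C(q,v) is skew-symmetric for every q and v. -/
open Matrix

/-- With the Coriolis matrix defined via Christoffel symbols,
`N(q,v) = Ṁ(q) - 2 C(q,v)` is skew-symmetric. -/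
theorem christoffel_skew (n : ℕ) (M : (Fin n → ℝ) → Matrix (Fin n) (Fin n) ℝ)
    (hsymm : ∀ p, (M p).IsSymm)
    (q v : Fin n → ℝ)
    (l : Fin n → Fin n → ((Fin n → ℝ) →L[ℝ] ℝ))
    (hM : ∀ i j, HasFDerivAt (fun p => M p i j) (l i j) q)
    (dM : Fin n → Matrix (Fin n) (Fin n) ℝ)
    (hdM : ∀ k i j, dM k i j = l i j (Pi.single k 1))
    (Mdot C : Matrix (Fin n) (Fin n) ℝ)
    (hMdot : ∀ i j, Mdot i j = ∑ k, dM k i j * v k)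
    (hC : ∀ i j, C i j = ∑ k, (1/2) * (dM k i j + dM j i k - dM i j k) * v k) :
    (Mdot - 2 • C)ᵀ = -(Mdot - 2 • C) := by
  ext i j
  simp only [transpose_apply, Matrix.sub_apply, Matrix.neg_apply, Matrix.smul_apply, smul_eq_mul, neg_sub]
  rw [hMdot, hMdot, hC, hC, Finset.smul_sum, Finset.smul_sum,
    ← Finset.sum_sub_distrib, ← Finset.sum_sub_distrib]
  apply Finset.sum_congr rfl
  intro k _
  simp only [nsmul_eq_mul, Nat.cast_ofNat]
  ring
end

section
/- Consider the interconnected closed-loop system: q̃̇ = −Πq̃ + s, M(q)ṡ + C(q,q̇)s + Ks = −Πq̃ − B K_ζ(ζ − ζ_d), ζ̇ = −K_ζ(ζ − ζ_d) + Bᵀs, with Π, K, K_ζ symmetric positive definite, M(q) symmetric positive definite, Ṁ − 2C skew-symmetric, and B any real matrix of compatible dimensions. Then V = (1/2)q̃ᵀΠq̃ + (1/2)sᵀM(q)s + (1/2)(ζ−ζ_d)ᵀK_ζ(ζ−ζ_d) satisfies V̇ = −q̃ᵀΠ²q̃ − sᵀKs − (ζ−ζ_d)ᵀK_ζ²(ζ−ζ_d)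 along solutions. -/
open Matrix

lemma hasDerivAt_quad {n m : ℕ} (A : Matrix (Fin n) (Fin m) ℝ)
    {x : ℝ → Fin n → ℝ} {y : ℝ → Fin m → ℝ} {x' : Fin n → ℝ} {y' : Fin m → ℝ} {t : ℝ}
    (hx : HasDerivAt x x' t) (hy : HasDerivAt y y' t) :
    HasDerivAt (fun t => x t ⬝ᵥ A.mulVec (y t))
      (x' ⬝ᵥ A.mulVec (y t) + x t ⬝ᵥ A.mulVec y') t := by
  have hx' := hasDerivAt_pi.mp hx
  have hy' := hasDerivAt_pi.mp hy
  simp only [dotProduct, mulVec, Finset.mul_sum]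
  have : HasDerivAt (fun t => ∑ i, ∑ j, x t i * (A i j * y t j))
      (∑ i, ∑ j, (x' i * (A i j * y t j) + x t i * (A i j * y' j))) t := by
    apply HasDerivAt.fun_sum; intro i _
    apply HasDerivAt.fun_sum; intro j _
    exact (hx' i).mul ((hy' j).const_mul (A i j))
  convert this using 1
  rw [← Finset.sum_add_distrib]
  congr 1; ext i
  rw [← Finset.sum_add_distrib]

lemma hasDerivAt_quadM {n : ℕ} (M Mdot : ℝ → Matrix (Fin n) (Fin n) ℝ)
    {x : ℝ → Fin n → ℝ} {x' : Fin n → ℝ} {t : ℝ}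
    (hM : ∀ i j, HasDerivAt (fun t => M t i j) (Mdot t i j) t)
    (hx : HasDerivAt x x' t) :
    HasDerivAt (fun t => x t ⬝ᵥ (M t).mulVec (x t))
      (x' ⬝ᵥ (M t).mulVec (x t) + x t ⬝ᵥ (Mdot t).mulVec (x t)
        + x t ⬝ᵥ (M t).mulVec x') t := by
  have hx' := hasDerivAt_pi.mp hx
  simp only [dotProduct, mulVec, Finset.mul_sum]
  have : HasDerivAt (fun t => ∑ i, ∑ j, x t i * (M t i j * x t j))
      (∑ i, ∑ j, (x' i * (M t i j * x t j)
        + x t i * (Mdot t i j * x t j + M t i j * x' j))) t := by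
    apply HasDerivAt.fun_sum; intro i _
    apply HasDerivAt.fun_sum; intro j _
    have h1 : HasDerivAt (fun u => M u i j * x u j)
        (Mdot t i j * x t j + M t i j * x' j) t := (hM i j).mul (hx' j)
    exact (hx' i).mul h1
  convert this using 1
  rw [← Finset.sum_add_distrib, ← Finset.sum_add_distrib]
  congr 1; ext i
  rw [← Finset.sum_add_distrib, ← Finset.sum_add_distrib]
  congr 1; ext j
  ring

lemma symm_quad {n : ℕ} {A : Matrix (Fin n) (Fin n) ℝ} (hA : Aᵀ = A)
    (x y : Fin n → ℝ) : x ⬝ᵥ A.mulVec y = y ⬝ᵥ A.mulVec x := by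
  rw [Matrix.dotProduct_mulVec, ← Matrix.mulVec_transpose, hA, dotProduct_comm]

lemma skew_quad {n : ℕ} {S : Matrix (Fin n) (Fin n) ℝ} (hS : Sᵀ = -S)
    (x : Fin n → ℝ) : x ⬝ᵥ S.mulVec x = 0 := by
  have h := Matrix.dotProduct_mulVec x S x
  rw [← Matrix.mulVec_transpose, hS, Matrix.neg_mulVec, neg_dotProduct,
    dotProduct_comm] at h
  have h2 : (S *ᵥ x) ⬝ᵥ x = 0 := by linarith
  rw [dotProduct_comm]
  exact h2

/-- Main stability result: for the node-edge interconnected closed loop, the total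
storage `V = (1/2) q̃ᵀ Pm q̃ + (1/2) sᵀ M(q) s + (1/2)(ζ-ζ_d)ᵀ K_ζ (ζ-ζ_d)` satisfies
`V̇ = -q̃ᵀ Pm² q̃ - sᵀ K s - (ζ-ζ_d)ᵀ K_ζ² (ζ-ζ_d)` along solutions. -/
theorem node_edge_closed_loop_lyapunov (a b : ℕ)
    (M Mdot C : ℝ → Matrix (Fin a) (Fin a) ℝ)
    (Pm K : Matrix (Fin a) (Fin a) ℝ) (Kζ : Matrix (Fin b) (Fin b) ℝ)
    (hPm : Pm.PosDef) (hK : K.PosDef) (hKζ : Kζ.PosDef)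
    (hMsymm : ∀ t, (M t).IsSymm) (hMpd : ∀ t, (M t).PosDef)
    (hMd : ∀ t i j, HasDerivAt (fun t => M t i j) (Mdot t i j) t)
    (hskew : ∀ t, (Mdot t - 2 • C t)ᵀ = -(Mdot t - 2 • C t))
    (B : Matrix (Fin a) (Fin b) ℝ) (ζd : Fin b → ℝ)
    (qt s sdot : ℝ → Fin a → ℝ) (ζ : ℝ → Fin b → ℝ)
    (hqt : ∀ t, HasDerivAt qt (-(Pm.mulVec (qt t)) + s t) t)
    (hs : ∀ t, HasDerivAt s (sdot t) t)
    (hode : ∀ t, (M t).mulVec (sdot t) + (C t).mulVec (s t) + K.mulVec (s t)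
        = -(Pm.mulVec (qt t)) - B.mulVec (Kζ.mulVec (ζ t - ζd)))
    (hζ : ∀ t, HasDerivAt ζ (-(Kζ.mulVec (ζ t - ζd)) + Bᵀ.mulVec (s t)) t) :
    ∀ t, HasDerivAt
        (fun t => (1/2 : ℝ) * (qt t ⬝ᵥ Pm.mulVec (qt t))
          + (1/2 : ℝ) * (s t ⬝ᵥ (M t).mulVec (s t))
          + (1/2 : ℝ) * ((ζ t - ζd) ⬝ᵥ Kζ.mulVec (ζ t - ζd)))
        (-(qt t ⬝ᵥ (Pm * Pm).mulVec (qt t)) - s t ⬝ᵥ K.mulVec (s t)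
          - (ζ t - ζd) ⬝ᵥ (Kζ * Kζ).mulVec (ζ t - ζd)) t := by
  intro t
  have eP : Pmᵀ = Pm := by
    have h := hPm.1; ext i j; simpa using congrFun (congrFun h i) j
  have eKζ : Kζᵀ = Kζ := by
    have h := hKζ.1; ext i j; simpa using congrFun (congrFun h i) j
  have eM : (M t)ᵀ = M t := hMsymm t
  have he : HasDerivAt (fun u => ζ u - ζd)
      (-(Kζ.mulVec (ζ t - ζd)) + Bᵀ.mulVec (s t)) t := (hζ t).sub_const ζd
  have h1 := hasDerivAt_quad Pm (hqt t) (hqt t)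
  have h2 := hasDerivAt_quadM M Mdot (hMd t) (hs t)
  have h3 := hasDerivAt_quad Kζ he he
  have hall := ((h1.const_mul ((1:ℝ)/2)).add (h2.const_mul ((1:ℝ)/2))).add
    (h3.const_mul ((1:ℝ)/2))
  refine hall.congr_deriv ?_
  have hodot : s t ⬝ᵥ ((M t).mulVec (sdot t)) + s t ⬝ᵥ ((C t).mulVec (s t))
      + s t ⬝ᵥ (K.mulVec (s t))
      = -(s t ⬝ᵥ Pm.mulVec (qt t)) - s t ⬝ᵥ (B.mulVec (Kζ.mulVec (ζ t - ζd))) := by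
    have := congrArg (fun z => s t ⬝ᵥ z) (hode t)
    simpa [dotProduct_add, dotProduct_sub, dotProduct_neg] using this
  have hsk : s t ⬝ᵥ (Mdot t).mulVec (s t) = 2 * (s t ⬝ᵥ (C t).mulVec (s t)) := by
    have h0 := skew_quad (hskew t) (s t)
    simp only [Matrix.sub_mulVec, dotProduct_sub, two_smul,
      Matrix.add_mulVec, dotProduct_add] at h0
    linarith
  have hMs : sdot t ⬝ᵥ (M t).mulVec (s t) = s t ⬝ᵥ (M t).mulVec (sdot t) :=
    symm_quad eM _ _
  have hPq : qt t ⬝ᵥ Pm.mulVec (s t) = s t ⬝ᵥ Pm.mulVec (qt t) := symm_quad eP _ _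
  have hA1 : (Pm.mulVec (qt t)) ⬝ᵥ (Pm.mulVec (qt t))
      = qt t ⬝ᵥ Pm.mulVec (Pm.mulVec (qt t)) := by
    rw [Matrix.dotProduct_mulVec, ← Matrix.mulVec_transpose, eP]
    exact dotProduct_comm _ _
  have hA5 : (Kζ.mulVec (ζ t - ζd)) ⬝ᵥ (Kζ.mulVec (ζ t - ζd))
      = (ζ t - ζd) ⬝ᵥ Kζ.mulVec (Kζ.mulVec (ζ t - ζd)) := by
    rw [Matrix.dotProduct_mulVec, ← Matrix.mulVec_transpose, eKζ]
    exact dotProduct_comm _ _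
  have hA6 : (Bᵀ.mulVec (s t)) ⬝ᵥ (Kζ.mulVec (ζ t - ζd))
      = s t ⬝ᵥ B.mulVec (Kζ.mulVec (ζ t - ζd)) := by
    rw [Matrix.dotProduct_mulVec (s t) B, ← Matrix.mulVec_transpose]
  have hcross : (ζ t - ζd) ⬝ᵥ Kζ.mulVec (Bᵀ.mulVec (s t))
      = s t ⬝ᵥ B.mulVec (Kζ.mulVec (ζ t - ζd)) := by
    rw [symm_quad eKζ (ζ t - ζd) (Bᵀ.mulVec (s t)), ← hA6, dotProduct_comm]
  have hPP : qt t ⬝ᵥ (Pm * Pm).mulVec (qt t)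
      = qt t ⬝ᵥ Pm.mulVec (Pm.mulVec (qt t)) := by rw [Matrix.mulVec_mulVec]
  have hKK : (ζ t - ζd) ⬝ᵥ (Kζ * Kζ).mulVec (ζ t - ζd)
      = (ζ t - ζd) ⬝ᵥ Kζ.mulVec (Kζ.mulVec (ζ t - ζd)) := by rw [Matrix.mulVec_mulVec]
  simp only [Matrix.mulVec_add, Matrix.mulVec_neg, dotProduct_add,
    dotProduct_neg, add_dotProduct, neg_dotProduct]
  linarith
end
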